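/- (Bapat–Sunder Hadamard majorization lemma.) Let A and B be N×N Hermitian complex matrices. If A is positive semidefinite and every diagonal entry of A equals 1, then the eigenvalue vector of the Hadamard product A∘B is majorized by the eigenvalue vector of B: λ(A∘B) ≺ λ(B). -/

import Mathlib

open Matrix BigOperators
open scoped ComplexOrder

/-- The sum of the `k` largest entries of `x`, expressed as the supremum of the
sums of `x` over all subsets of cardinality `k`. -/
noncomputable def kMaxSum {N : ℕ} (x : Fin N → ℝ) (k : ℕ) : ℝ :=
  sSup ((fun A : Finset (Fin N) => ∑ i ∈ A, x i) '' {A : Finset (Fin N) | A.card = k})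

/-- `x` is majorized by `y` (`x ≺ y`): every partial sum of the `k` largest
entries of `x` is at most the corresponding sum for `y`, and the total sums
coincide. -/
def MajorizedBy {N : ℕ} (x y : Fin N → ℝ) : Prop :=
  (∀ k, k ≤ N → kMaxSum x k ≤ kMaxSum y k) ∧ (∑ i, x i = ∑ i, y i)

lemma le_kMaxSum {N : ℕ} (x : Fin N → ℝ) (T : Finset (Fin N)) :
    ∑ i ∈ T, x i ≤ kMaxSum x T.card := by
  apply le_csSup ((Set.toFinite _).image _).bddAbove
  exact ⟨T, rfl, rfl⟩

lemma kMaxSum_le {N : ℕ} {x : Fin N → ℝ} {k : ℕ} (hk : k ≤ N) {c : ℝ}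
    (h : ∀ T : Finset (Fin N), T.card = k → ∑ i ∈ T, x i ≤ c) : kMaxSum x k ≤ c := by
  apply csSup_le
  · obtain ⟨T, -, hT⟩ := Finset.exists_subset_card_eq (show k ≤ (Finset.univ : Finset (Fin N)).card by simpa using hk)
    exact ⟨_, T, hT, rfl⟩
  · rintro r ⟨T, hT, rfl⟩; exact h T hT

lemma sum_mul_le_kMaxSum {N : ℕ} (β t : Fin N → ℝ) (k : ℕ) (hk : k ≤ N)
    (ht0 : ∀ j, 0 ≤ t j) (ht1 : ∀ j, t j ≤ 1) (hts : ∑ j, t j = k) :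
    ∑ j, t j * β j ≤ kMaxSum β k := by
  rcases Nat.eq_zero_or_pos k with hk0 | hkpos
  · subst hk0
    have hz : ∀ j, t j = 0 := by
      intro j
      have := Finset.sum_eq_zero_iff_of_nonneg (fun i _ => ht0 i) |>.mp (by simpa using hts)
      exact this j (Finset.mem_univ j)
    have : ∑ j, t j * β j = 0 := Finset.sum_eq_zero fun j _ => by rw [hz j, zero_mul]
    rw [this]
    have := le_kMaxSum β (∅ : Finset (Fin N))
    simpa using this
  · -- choose a maximizing subset T of cardinality k
    obtain ⟨T, hTmem, hTmax⟩ := Finset.exists_max_image ((Finset.univ : Finset (Fin N)).powersetCard k)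
      (fun S => ∑ i ∈ S, β i) (Finset.powersetCard_nonempty.mpr (by simpa using hk))
    have hTcard : T.card = k := (Finset.mem_powersetCard_univ.mp hTmem)
    have hTne : T.Nonempty := Finset.card_pos.mp (hTcard ▸ hkpos)
    obtain ⟨i₀, hi₀T, hi₀min⟩ := Finset.exists_min_image T β hTne
    set c := β i₀ with hc
    -- swap property: β j ≤ c for j ∉ T
    have hswap : ∀ j, j ∉ T → β j ≤ c := by
      intro j hj
      by_contra hlt
      push_neg at hlt
      have hjer : j ∉ T.erase i₀ := fun h => hj (Finset.mem_of_mem_erase h)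
      set T' := insert j (T.erase i₀) with hT'
      have hT'card : T'.card = k := by
        rw [hT', Finset.card_insert_of_notMem hjer, Finset.card_erase_of_mem hi₀T, hTcard]
        omega
      have hle : ∑ i ∈ T', β i ≤ ∑ i ∈ T, β i :=
        hTmax T' (Finset.mem_powersetCard_univ.mpr hT'card)
      have h1 : ∑ i ∈ T', β i = β j + ∑ i ∈ T.erase i₀, β i := Finset.sum_insert hjer
      have h2 : ∑ i ∈ T.erase i₀, β i + β i₀ = ∑ i ∈ T, β i := Finset.sum_erase_add T β hi₀T
      linarith
    have hβc : ∀ i ∈ T, c ≤ β i := hi₀min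
    -- main estimate
    have h1 : ∑ j ∈ T, t j * β j ≤ ∑ j ∈ T, (β j + (t j - 1) * c) := by
      apply Finset.sum_le_sum
      intro j hj
      nlinarith [hβc j hj, ht1 j, ht0 j]
    have h2 : ∑ j ∈ Tᶜ, t j * β j ≤ ∑ j ∈ Tᶜ, t j * c := by
      apply Finset.sum_le_sum
      intro j hj
      exact mul_le_mul_of_nonneg_left (hswap j (Finset.mem_compl.mp hj)) (ht0 j)
    have hsplit : ∑ j ∈ T, t j * β j + ∑ j ∈ Tᶜ, t j * β j = ∑ j, t j * β j :=
      Finset.sum_add_sum_compl T _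
    have hsplit' : ∑ j ∈ T, t j + ∑ j ∈ Tᶜ, t j = (k : ℝ) := by
      rw [Finset.sum_add_sum_compl T t, hts]
    have e1 : ∑ j ∈ T, (β j + (t j - 1) * c) =
        ∑ j ∈ T, β j + ((∑ j ∈ T, t j) - k) * c := by
      rw [Finset.sum_add_distrib, ← Finset.sum_mul, Finset.sum_sub_distrib]
      simp [hTcard]
    have e2 : ∑ j ∈ Tᶜ, t j * c = (∑ j ∈ Tᶜ, t j) * c := (Finset.sum_mul _ _ _).symm
    have hfinal : ∑ j, t j * β j ≤ ∑ j ∈ T, β j := by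
      have : ((∑ j ∈ T, t j) - k) * c + (∑ j ∈ Tᶜ, t j) * c = 0 := by
        rw [← add_mul]; rw [show (∑ j ∈ T, t j) - k + ∑ j ∈ Tᶜ, t j = 0 by linarith]; ring
      linarith
    calc ∑ j, t j * β j ≤ ∑ i ∈ T, β i := hfinal
      _ ≤ kMaxSum β k := hTcard ▸ le_kMaxSum β T

section MatrixLemmas

variable {N : ℕ}

lemma psd_diag_re_nonneg {M : Matrix (Fin N) (Fin N) ℂ} (hM : M.PosSemidef) (j : Fin N) :
    0 ≤ (M j j).re := by
  have h := hM.re_dotProduct_nonneg (Pi.single j 1)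
  simpa [dotProduct, Matrix.mulVec_single, Pi.single_apply, apply_ite] using h

lemma psd_matrix_sum {ι : Type*} (s : Finset ι) (f : ι → Matrix (Fin N) (Fin N) ℂ)
    (h : ∀ i ∈ s, (f i).PosSemidef) : (∑ i ∈ s, f i).PosSemidef := by
  classical
  induction s using Finset.induction with
  | empty => simpa using (Matrix.PosSemidef.zero : (0 : Matrix (Fin N) (Fin N) ℂ).PosSemidef)
  | insert _ _ hx ih =>
    rw [Finset.sum_insert hx]
    exact (h _ (Finset.mem_insert_self _ _)).add (ih fun i hi => h i (Finset.mem_insert_of_mem hi))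

lemma trace_mul_diag (M : Matrix (Fin N) (Fin N) ℂ) (d : Fin N → ℂ) :
    (M * Matrix.diagonal d).trace = ∑ j, M j j * d j := by
  simp [Matrix.trace, Matrix.diag, Matrix.mul_diagonal]

lemma trace_eq_sum_eigen {M : Matrix (Fin N) (Fin N) ℂ} (hM : M.IsHermitian) :
    M.trace = ∑ i, (hM.eigenvalues i : ℂ) := by
  set U : Matrix (Fin N) (Fin N) ℂ := (hM.eigenvectorUnitary : Matrix (Fin N) (Fin N) ℂ) with hU
  have hU2 : star U * U = 1 := Matrix.mem_unitaryGroup_iff'.mp (hM.eigenvectorUnitary).2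
  nth_rewrite 1 [hM.spectral_theorem]
  simp only [Unitary.conjStarAlgAut_apply, Unitary.coe_star]
  rw [← hU]
  rw [Matrix.trace_mul_cycle, hU2, one_mul, Matrix.trace_diagonal]
  simp

lemma exists_proj {M : Matrix (Fin N) (Fin N) ℂ} (hM : M.IsHermitian) (T : Finset (Fin N)) :
    ∃ P : Matrix (Fin N) (Fin N) ℂ, P.PosSemidef ∧ ((1 : Matrix (Fin N) (Fin N) ℂ) - P).PosSemidef ∧
      P.trace = (T.card : ℂ) ∧ (P * M).trace = ∑ i ∈ T, (hM.eigenvalues i : ℂ) := by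
  classical
  set U : Matrix (Fin N) (Fin N) ℂ := (hM.eigenvectorUnitary : Matrix (Fin N) (Fin N) ℂ) with hU
  have hU1 : U * star U = 1 := Matrix.mem_unitaryGroup_iff.mp (hM.eigenvectorUnitary).2
  have hU2 : star U * U = 1 := Matrix.mem_unitaryGroup_iff'.mp (hM.eigenvectorUnitary).2
  have hcancel : ∀ Z : Matrix (Fin N) (Fin N) ℂ, star U * (U * Z) = Z := fun Z => by
    rw [← mul_assoc, hU2, one_mul]
  set χ : Fin N → ℂ := fun i => if i ∈ T then 1 else 0 with hχ
  refine ⟨U * Matrix.diagonal χ * star U, ?_, ?_, ?_, ?_⟩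
  · have hd : (Matrix.diagonal χ).PosSemidef := Matrix.posSemidef_diagonal_iff.mpr
      (fun i => by by_cases h : i ∈ T <;> simp [hχ, h])
    simpa [Matrix.star_eq_conjTranspose] using hd.mul_mul_conjTranspose_same U
  · have heq : (1 : Matrix (Fin N) (Fin N) ℂ) - U * Matrix.diagonal χ * star U
        = U * Matrix.diagonal (fun i => 1 - χ i) * star U := by
      have h1 : Matrix.diagonal (fun i => 1 - χ i) = 1 - Matrix.diagonal χ := by
        ext i i'
        by_cases h : i = i' <;> simp [Matrix.diagonal_apply, Matrix.one_apply, h]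
      rw [h1, Matrix.mul_sub, Matrix.mul_one, Matrix.sub_mul, hU1]
    rw [heq]
    have hd : (Matrix.diagonal (fun i => 1 - χ i)).PosSemidef := Matrix.posSemidef_diagonal_iff.mpr
      (fun i => by by_cases h : i ∈ T <;> simp [hχ, h])
    simpa [Matrix.star_eq_conjTranspose] using hd.mul_mul_conjTranspose_same U
  · rw [Matrix.trace_mul_cycle, hU2, one_mul, Matrix.trace_diagonal]
    simp [hχ, Finset.sum_ite_mem]
  · nth_rewrite 1 [hM.spectral_theorem]
    simp only [Unitary.conjStarAlgAut_apply, Unitary.coe_star]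
    rw [← hU]
    have mident : (U * Matrix.diagonal χ * star U) *
        (U * Matrix.diagonal (RCLike.ofReal ∘ hM.eigenvalues) * star U)
        = U * (Matrix.diagonal χ * Matrix.diagonal (RCLike.ofReal ∘ hM.eigenvalues)) * star U := by
      simp only [mul_assoc]
      rw [hcancel]
    rw [mident, Matrix.trace_mul_cycle, hU2, one_mul, Matrix.diagonal_mul_diagonal,
      Matrix.trace_diagonal]
    simp [hχ, ite_mul, Finset.sum_ite_mem]

lemma fan_bound {B : Matrix (Fin N) (Fin N) ℂ} (hB : B.IsHermitian)
    {X : Matrix (Fin N) (Fin N) ℂ} (hX : X.PosSemidef)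
    (hX1 : ((1 : Matrix (Fin N) (Fin N) ℂ) - X).PosSemidef)
    {k : ℕ} (hk : k ≤ N) (htr : X.trace = (k : ℂ)) :
    ((X * B).trace).re ≤ kMaxSum hB.eigenvalues k := by
  set V : Matrix (Fin N) (Fin N) ℂ := (hB.eigenvectorUnitary : Matrix (Fin N) (Fin N) ℂ) with hV
  have hV1 : V * star V = 1 := Matrix.mem_unitaryGroup_iff.mp (hB.eigenvectorUnitary).2
  have hV2 : star V * V = 1 := Matrix.mem_unitaryGroup_iff'.mp (hB.eigenvectorUnitary).2
  have hcancel : ∀ Z : Matrix (Fin N) (Fin N) ℂ, V * (star V * Z) = Z := fun Z => by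
    rw [← mul_assoc, hV1, one_mul]
  have hcancel2 : ∀ Z : Matrix (Fin N) (Fin N) ℂ, star V * (V * Z) = Z := fun Z => by
    rw [← mul_assoc, hV2, one_mul]
  set Y : Matrix (Fin N) (Fin N) ℂ := star V * X * V with hY
  have hYpsd : Y.PosSemidef := by
    rw [hY, Matrix.star_eq_conjTranspose]
    exact hX.conjTranspose_mul_mul_same V
  have hY1psd : ((1 : Matrix (Fin N) (Fin N) ℂ) - Y).PosSemidef := by
    have h : (1 : Matrix (Fin N) (Fin N) ℂ) - Y = star V * (1 - X) * V := by
      rw [Matrix.mul_sub, Matrix.mul_one, Matrix.sub_mul, hV2, hY]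
    rw [h]
    simpa [Matrix.star_eq_conjTranspose] using hX1.conjTranspose_mul_mul_same V
  have ht0 : ∀ j, 0 ≤ (Y j j).re := fun j => psd_diag_re_nonneg hYpsd j
  have ht1 : ∀ j, (Y j j).re ≤ 1 := by
    intro j
    have h := psd_diag_re_nonneg hY1psd j
    have h1 : ((1 : Matrix (Fin N) (Fin N) ℂ) - Y) j j = 1 - Y j j := by
      simp [Matrix.sub_apply, Matrix.one_apply]
    rw [h1] at h
    simp only [Complex.sub_re, Complex.one_re] at h
    linarith
  have hts : ∑ j, (Y j j).re = (k : ℝ) := by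
    have htrY : Y.trace = (k : ℂ) := by
      rw [hY, Matrix.trace_mul_cycle, hV1, one_mul, htr]
    have h := congrArg Complex.re htrY
    simpa [Matrix.trace, Matrix.diag, Complex.re_sum] using h
  have mident : X * B = V * (Y * Matrix.diagonal (RCLike.ofReal ∘ hB.eigenvalues)) * star V := by
    nth_rewrite 1 [hB.spectral_theorem]
    simp only [Unitary.conjStarAlgAut_apply, Unitary.coe_star]
    rw [← hV]
    rw [hY]
    simp only [mul_assoc]
    rw [hcancel]
  have key : (X * B).trace = ∑ j, Y j j * ((hB.eigenvalues j : ℝ) : ℂ) := by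
    rw [mident, Matrix.trace_mul_cycle, hV2, one_mul, trace_mul_diag]
    simp [Function.comp]
  rw [key]
  have hre : (∑ j, Y j j * ((hB.eigenvalues j : ℝ) : ℂ)).re
      = ∑ j, (Y j j).re * hB.eigenvalues j := by
    rw [Complex.re_sum]
    apply Finset.sum_congr rfl
    intro j _
    simp [Complex.mul_re]
  rw [hre]
  exact sum_mul_le_kMaxSum hB.eigenvalues (fun j => (Y j j).re) k hk ht0 ht1 hts

end MatrixLemmas

section Hadamard

variable {N : ℕ}

lemma hadamard_decomp (A B C : Matrix (Fin N) (Fin N) ℂ) (hC : A = Cᴴ * C) :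
    Matrix.hadamard A B
      = ∑ α, (Matrix.diagonal (fun j => C α j))ᴴ * B * Matrix.diagonal (fun j => C α j) := by
  rw [hC]
  ext j j'
  simp only [Matrix.hadamard_apply, Matrix.sum_apply, Matrix.diagonal_conjTranspose,
    Matrix.mul_diagonal, Matrix.diagonal_mul, Pi.star_apply]
  rw [Matrix.mul_apply, Finset.sum_mul]
  apply Finset.sum_congr rfl
  intro α _
  simp only [Matrix.conjTranspose_apply]
  ring

lemma diag_sum_right (C : Matrix (Fin N) (Fin N) ℂ) (hdiag : ∀ j, (Cᴴ * C) j j = 1) :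
    (∑ α, Matrix.diagonal (fun j => C α j) * (Matrix.diagonal (fun j => C α j))ᴴ)
      = (1 : Matrix (Fin N) (Fin N) ℂ) := by
  ext i i'
  by_cases h : i = i'
  · subst h
    have h1 := hdiag i
    rw [Matrix.mul_apply] at h1
    simp only [Matrix.conjTranspose_apply] at h1
    simp only [Matrix.sum_apply, Matrix.diagonal_conjTranspose, Matrix.diagonal_mul_diagonal,
      Matrix.diagonal_apply, Matrix.one_apply, Pi.star_apply, Pi.mul_apply, if_pos rfl, if_true,
      eq_self_iff_true]
    rw [← h1]
    apply Finset.sum_congr rfl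
    intro α _
    ring
  · simp [Matrix.sum_apply, Matrix.diagonal_conjTranspose, Matrix.diagonal_mul_diagonal,
      Matrix.diagonal_apply, Matrix.one_apply, h]

lemma diag_sum_left (C : Matrix (Fin N) (Fin N) ℂ) (hdiag : ∀ j, (Cᴴ * C) j j = 1) :
    (∑ α, (Matrix.diagonal (fun j => C α j))ᴴ * Matrix.diagonal (fun j => C α j))
      = (1 : Matrix (Fin N) (Fin N) ℂ) := by
  ext i i'
  by_cases h : i = i'
  · subst h
    have h1 := hdiag i
    rw [Matrix.mul_apply] at h1
    simp only [Matrix.conjTranspose_apply] at h1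
    simp only [Matrix.sum_apply, Matrix.diagonal_conjTranspose, Matrix.diagonal_mul_diagonal,
      Matrix.diagonal_apply, Matrix.one_apply, Pi.star_apply, Pi.mul_apply, if_pos rfl, if_true,
      eq_self_iff_true]
    exact h1
  · simp [Matrix.sum_apply, Matrix.diagonal_conjTranspose, Matrix.diagonal_mul_diagonal,
      Matrix.diagonal_apply, Matrix.one_apply, h]

end Hadamard

open scoped MatrixOrder in
lemma psd_exists_conjTranspose_mul {N : ℕ} {A : Matrix (Fin N) (Fin N) ℂ} (hA : A.PosSemidef) :
    ∃ C : Matrix (Fin N) (Fin N) ℂ, A = Cᴴ * C := by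
  obtain ⟨X, hX, -, hXA⟩ := CFC.exists_sqrt_of_isSelfAdjoint_of_quasispectrumRestricts
    hA.isHermitian (QuasispectrumRestricts.nnreal_of_nonneg hA.nonneg)
  refine ⟨X, ?_⟩
  rw [← hXA]
  exact congrArg (· * X) hX.star_eq.symm

/-- **Bapat–Sunder Hadamard majorization lemma.**  If `A` and `B` are Hermitian
`N × N` matrices, `A` is positive semidefinite and every diagonal entry of `A`
equals `1`, then `λ(A ∘ B) ≺ λ(B)`. -/
theorem bapat_sunder_hadamard_majorization {N : ℕ}
    (A B : Matrix (Fin N) (Fin N) ℂ)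
    (hA : A.PosSemidef)
    (hAdiag : ∀ j, A j j = 1)
    (hB : B.IsHermitian)
    (hAB : (Matrix.hadamard A B).IsHermitian) :
    MajorizedBy hAB.eigenvalues hB.eigenvalues := by
  obtain ⟨C, hC⟩ := psd_exists_conjTranspose_mul hA
  have hCdiag : ∀ j, (Cᴴ * C) j j = 1 := fun j => by rw [← hC]; exact hAdiag j
  set D : Fin N → Matrix (Fin N) (Fin N) ℂ := fun α => Matrix.diagonal (fun j => C α j) with hD
  have hdec : Matrix.hadamard A B = ∑ α, (D α)ᴴ * B * D α := hadamard_decomp A B C hC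
  have hsum1 : (∑ α, D α * (D α)ᴴ) = (1 : Matrix (Fin N) (Fin N) ℂ) := diag_sum_right C hCdiag
  have hsum2 : (∑ α, (D α)ᴴ * D α) = (1 : Matrix (Fin N) (Fin N) ℂ) := diag_sum_left C hCdiag
  constructor
  · intro k hk
    apply kMaxSum_le hk
    intro T hT
    obtain ⟨P, hP, hP1, hPtr, hPM⟩ := exists_proj hAB T
    set X : Matrix (Fin N) (Fin N) ℂ := ∑ α, D α * P * (D α)ᴴ with hX
    have hXpsd : X.PosSemidef :=
      psd_matrix_sum _ _ (fun α _ => hP.mul_mul_conjTranspose_same (D α))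
    have hXone : ((1 : Matrix (Fin N) (Fin N) ℂ) - X).PosSemidef := by
      have h : (1 : Matrix (Fin N) (Fin N) ℂ) - X = ∑ α, D α * (1 - P) * (D α)ᴴ := by
        simp only [Matrix.mul_sub, Matrix.sub_mul, Matrix.mul_one, Finset.sum_sub_distrib,
          hsum1, hX]
      rw [h]
      exact psd_matrix_sum _ _ (fun α _ => hP1.mul_mul_conjTranspose_same (D α))
    have hXtr : X.trace = (k : ℂ) := by
      rw [hX, Matrix.trace_sum]
      have h1 : ∀ α : Fin N, (D α * P * (D α)ᴴ).trace = (((D α)ᴴ * D α) * P).trace := by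
        intro α
        rw [Matrix.trace_mul_cycle]
      simp only [h1]
      rw [← Matrix.trace_sum, ← Finset.sum_mul, hsum2, one_mul, hPtr, hT]
    have hXB : (X * B).trace = (P * Matrix.hadamard A B).trace := by
      rw [hX, Finset.sum_mul, Matrix.trace_sum]
      have h1 : ∀ α : Fin N, ((D α * P * (D α)ᴴ) * B).trace
          = (P * ((D α)ᴴ * B * D α)).trace := by
        intro α
        calc ((D α * P * (D α)ᴴ) * B).trace
            = ((D α * P) * ((D α)ᴴ * B)).trace := by simp only [mul_assoc]
          _ = (((D α)ᴴ * B) * (D α * P)).trace := Matrix.trace_mul_comm _ _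
          _ = (((D α)ᴴ * B * D α) * P).trace := by simp only [mul_assoc]
          _ = (P * ((D α)ᴴ * B * D α)).trace := Matrix.trace_mul_comm _ _
      simp only [h1]
      rw [← Matrix.trace_sum, ← Finset.mul_sum, ← hdec]
    have goal1 : ∑ i ∈ T, hAB.eigenvalues i = ((X * B).trace).re := by
      rw [hXB, hPM, Complex.re_sum]
      simp
    rw [← hT, goal1]
    rw [hT]
    exact fan_bound hB hXpsd hXone hk hXtr
  · have h1 := trace_eq_sum_eigen hAB
    have h2 := trace_eq_sum_eigen hB
    have h3 : (Matrix.hadamard A B).trace = B.trace := by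
      simp only [Matrix.trace, Matrix.diag, Matrix.hadamard_apply]
      apply Finset.sum_congr rfl
      intro j _
      rw [hAdiag j, one_mul]
    have h4 := congrArg Complex.re (h1.symm.trans (h3.trans h2))
    simpa [Complex.re_sum] using h4
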